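/- arXiv:2402.01554 — 2 statements merged into one kernel-verified Lean document; each statement's English description precedes it below -/
import Mathlib

section
/- A Euclidean triangle all of whose angles are greater than π/4 and whose longest side has length between ℓ/2 and ℓ is 8-bilipschitz homeomorphic, via an affine map, to the equilateral triangle of side length ℓ. -/
open Real EuclideanGeometry

section helpers

open Complex

noncomputable def Complex.abs : AbsoluteValue ℂ ℝ := NormedField.toAbsoluteValue ℂ

lemma Complex.abs_apply (z : ℂ) : Complex.abs z = Real.sqrt (Complex.normSq z) :=
  Complex.norm_def z

lemma Complex.abs_conj (z : ℂ) : Complex.abs ((starRingEnd ℂ) z) = Complex.abs z :=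
  Complex.norm_conj z

lemma Complex.abs_ofReal (r : ℝ) : Complex.abs (r : ℂ) = |r| := by
  show ‖(r : ℂ)‖ = |r|
  simp

lemma Complex.sq_abs (z : ℂ) : Complex.abs z ^ 2 = Complex.normSq z :=
  Complex.sq_norm z

private lemma dist_eq_abs (z w : ℂ) : dist z w = Complex.abs (z - w) := Complex.dist_eq z w

private lemma sin_angle_mul_abs (u w : ℂ) :
    Real.sin (InnerProductGeometry.angle u w) * (Complex.abs u * Complex.abs w)
      = |((starRingEnd ℂ) u * w).im| := by
  have h := InnerProductGeometry.sin_angle_mul_norm_mul_norm u w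
  have key : inner ℝ u u * inner ℝ w w - inner ℝ u w * inner ℝ u w
      = (((starRingEnd ℂ) u * w).im)^2 := by
    simp only [Complex.inner, Complex.mul_re, Complex.mul_im, Complex.conj_re, Complex.conj_im]
    ring
  rw [show Complex.abs u = ‖u‖ from rfl, show Complex.abs w = ‖w‖ from rfl, h, key,
    Real.sqrt_sq_eq_abs]

private noncomputable def Lmap (α β : ℂ) : ℂ →ₗ[ℝ] ℂ where
  toFun z := α * z + β * (starRingEnd ℂ) z
  map_add' x y := by simp [map_add]; ring
  map_smul' r z := by simp [Complex.real_smul, map_mul, Complex.conj_ofReal]; ring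

private noncomputable def Fmap (α β A : ℂ) : ℂ →ᵃ[ℝ] ℂ where
  toFun z := α * (z - A) + β * (starRingEnd ℂ) (z - A)
  linear := Lmap α β
  map_vadd' p v := by
    simp only [vadd_eq_add, Lmap, LinearMap.coe_mk, AddHom.coe_mk, map_add, map_sub]
    ring

private lemma detkey (u w ζ : ℂ) (t : ℝ) :
    normSq ((t:ℂ)*u * (starRingEnd ℂ) w - ζ*(t:ℂ)*u * (starRingEnd ℂ) u)
      - normSq (u * (ζ*(t:ℂ)*u) - w * ((t:ℂ)*u))
      = 4 * t^2 * normSq u * ζ.im * (((starRingEnd ℂ) u * w).im) := by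
  simp only [normSq_apply, mul_re, mul_im, sub_re, sub_im, conj_re, conj_im,
    ofReal_re, ofReal_im]
  ring


private lemma sides_key {a b c S sA sB sC s2 : ℝ}
    (ha0 : 0 < a) (hb0 : 0 < b) (hc0 : 0 < c)
    (h2 : s2^2 = 2) (hs2 : 0 < s2)
    (hsA1 : s2/2 < sA) (hsB1 : s2/2 < sB) (hsC1 : s2/2 < sC)
    (hsA2 : sA ≤ 1) (hsB2 : sB ≤ 1) (hsC2 : sC ≤ 1)
    (hSA : sA * (a*b) = S) (hSB : sB * (a*c) = S) (hSC : sC * (b*c) = S) :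
    max a (max c b) ^ 2 / 2 ≤ S ∧ S ≤ a * b := by
  have l1 : sA * a = sC * c := by
    have h := hSA.trans hSC.symm
    exact mul_right_cancel₀ (ne_of_gt hb0) (by linear_combination h)
  have l3 : sB * a = sC * b := by
    have h := hSB.trans hSC.symm
    exact mul_right_cancel₀ (ne_of_gt hc0) (by linear_combination h)
  constructor
  · rcases max_cases a (max c b) with ⟨he, h1⟩ | ⟨he, h1⟩
    · rw [he]
      have hblb : s2/2 * a ≤ b := by
        nlinarith [mul_nonneg (sub_nonneg.mpr hsC2) hb0.le,
          mul_nonneg (sub_nonneg.mpr hsB1.le) ha0.le]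
      nlinarith [mul_nonneg (sub_nonneg.mpr hsA1.le) (mul_pos ha0 hb0).le,
        mul_le_mul_of_nonneg_left hblb (by positivity : (0:ℝ) ≤ s2/2*a)]
    · rcases max_cases c b with ⟨he2, h2'⟩ | ⟨he2, h2'⟩
      · rw [he, he2]
        have halb : s2/2 * c ≤ a := by
          nlinarith [mul_nonneg (sub_nonneg.mpr hsA2) ha0.le,
            mul_nonneg (sub_nonneg.mpr hsC1.le) hc0.le]
        nlinarith [mul_nonneg (sub_nonneg.mpr hsB1.le) (mul_pos ha0 hc0).le,
          mul_le_mul_of_nonneg_left halb (by positivity : (0:ℝ) ≤ s2/2*c)]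
      · rw [he, he2]
        have halb : s2/2 * b ≤ a := by
          nlinarith [mul_nonneg (sub_nonneg.mpr hsB2) ha0.le,
            mul_nonneg (sub_nonneg.mpr hsC1.le) hb0.le]
        nlinarith [mul_nonneg (sub_nonneg.mpr hsA1.le) (mul_pos ha0 hb0).le,
          mul_le_mul_of_nonneg_left halb (by positivity : (0:ℝ) ≤ s2/2*b)]
  · nlinarith [mul_nonneg (sub_nonneg.mpr hsA2) (mul_pos ha0 hb0).le]

private lemma bounds_key {x y L a b d S s3 : ℝ}
    (hx : 0 ≤ x) (hy : 0 ≤ y)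
    (hL : 0 < L) (hS : 0 < S) (hd0 : 0 < d)
    (ha0 : 0 < a) (hb0 : 0 < b)
    (ha : a ≤ d) (hb : b ≤ d) (hd2 : d ≤ L) (hd1 : L/2 ≤ d)
    (hSd : d^2/2 ≤ S)
    (hs3 : s3^2 = 3) (hs30 : 1 ≤ s3)
    (hxb : x ≤ L*(a+b)/(2*S)) (hyb : y ≤ L*(a+b)/(2*S))
    (hdet : x^2 - y^2 = s3*L^2/(2*S)) :
    x + y ≤ 8 ∧ 1/8 ≤ x - y := by
  have hsum1 : L*(a+b) ≤ 8*S := by nlinarith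
  have hsum2 : L*(a+b)/(2*S) ≤ 4 := by
    rw [div_le_iff₀ (by positivity)]; nlinarith
  have hup : x + y ≤ 8 := by linarith
  refine ⟨hup, ?_⟩
  have hnum : 0 < s3*L^2/(2*S) := by positivity
  have hxy0 : 0 < x + y := by
    rcases lt_or_ge 0 (x+y) with h | h
    · exact h
    · have hx0 : x = 0 := le_antisymm (by linarith) hx
      have hy0 : y = 0 := le_antisymm (by linarith) hy
      rw [hx0, hy0] at hdet
      simp at hdet
      nlinarith
  have key : (x - y) * (x + y) * (2*S) = s3*L^2 := by
    have : (x - y) * (x + y) = s3*L^2/(2*S) := by linear_combination hdet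
    rw [this]; field_simp
  have hsumS : (x+y) * (2*S) ≤ 2*(L*(a+b)) := by
    have hx' : x * (2*S) ≤ L*(a+b) := by
      have := mul_le_mul_of_nonneg_right hxb (by positivity : (0:ℝ) ≤ 2*S)
      rwa [div_mul_cancel₀ _ (by positivity : (2*S) ≠ 0)] at this
    have hy' : y * (2*S) ≤ L*(a+b) := by
      have := mul_le_mul_of_nonneg_right hyb (by positivity : (0:ℝ) ≤ 2*S)
      rwa [div_mul_cancel₀ _ (by positivity : (2*S) ≠ 0)] at this
    nlinarith
  have hab2L : a + b ≤ 2*L := by linarith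
  nlinarith [key, hsumS, mul_pos hxy0 (by positivity : (0:ℝ) < 2*S),
    mul_le_mul_of_nonneg_left hab2L hL.le, sq_nonneg L, mul_pos hL hL]

private theorem complex_eight (ℓ : ℝ) (hℓ : 0 < ℓ) (A B C : ℂ)
    (hangA : π / 4 < ∠ B A C) (hangB : π / 4 < ∠ A B C) (hangC : π / 4 < ∠ A C B)
    (hlong1 : ℓ / 2 ≤ max (dist A B) (max (dist B C) (dist A C)))
    (hlong2 : max (dist A B) (max (dist B C) (dist A C)) ≤ ℓ) :
    ∃ (f : ℂ →ᵃ[ℝ] ℂ) (P Q R : ℂ),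
      dist P Q = ℓ ∧ dist Q R = ℓ ∧ dist P R = ℓ ∧
      f A = P ∧ f B = Q ∧ f C = R ∧
      ∀ x y : ℂ, dist x y / 8 ≤ dist (f x) (f y) ∧ dist (f x) (f y) ≤ 8 * dist x y := by
  -- distinctness
  have hBA : B ≠ A := by
    intro h
    rcases eq_or_ne A C with h2 | h2
    · rw [h, ← h2] at hlong1
      simp at hlong1
      linarith
    · rw [h] at hangC
      rw [angle_self_of_ne h2] at hangC
      linarith [pi_pos]
  have hCA : C ≠ A := by
    intro h
    rw [h] at hangB
    rw [angle_self_of_ne (Ne.symm hBA)] at hangB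
    linarith [pi_pos]
  have hCB : C ≠ B := by
    intro h
    rw [h] at hangA
    rw [angle_self_of_ne hBA] at hangA
    linarith [pi_pos]
  -- angle sum, angles < π/2
  have hsum := EuclideanGeometry.angle_add_angle_add_angle_eq_pi C hBA
  rw [EuclideanGeometry.angle_comm B C A, EuclideanGeometry.angle_comm C A B] at hsum
  have hA2 : ∠ B A C < π / 2 := by linarith
  have hB2 : ∠ A B C < π / 2 := by linarith
  have hC2 : ∠ A C B < π / 2 := by linarith
  -- sines
  obtain ⟨sA, hsAdef⟩ : ∃ x, x = Real.sin (∠ B A C) := ⟨_, rfl⟩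
  obtain ⟨sB, hsBdef⟩ : ∃ x, x = Real.sin (∠ A B C) := ⟨_, rfl⟩
  obtain ⟨sC, hsCdef⟩ : ∃ x, x = Real.sin (∠ A C B) := ⟨_, rfl⟩
  have sinlb : ∀ θ : ℝ, π / 4 < θ → θ < π / 2 → Real.sqrt 2 / 2 < Real.sin θ := by
    intro θ h1 h2
    have := Real.strictMonoOn_sin (a := π/4) (b := θ)
      ⟨by linarith [pi_pos], by linarith [pi_pos]⟩ ⟨by linarith [pi_pos], le_of_lt h2⟩ h1
    rwa [Real.sin_pi_div_four] at this
  have hsA1 : Real.sqrt 2 / 2 < sA := by rw [hsAdef]; exact sinlb _ hangA hA2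
  have hsB1 : Real.sqrt 2 / 2 < sB := by rw [hsBdef]; exact sinlb _ hangB hB2
  have hsC1 : Real.sqrt 2 / 2 < sC := by rw [hsCdef]; exact sinlb _ hangC hC2
  have hsA2 : sA ≤ 1 := by rw [hsAdef]; exact Real.sin_le_one _
  have hsB2 : sB ≤ 1 := by rw [hsBdef]; exact Real.sin_le_one _
  have hsC2 : sC ≤ 1 := by rw [hsCdef]; exact Real.sin_le_one _
  have sqrt2sq : Real.sqrt 2 ^ 2 = 2 := Real.sq_sqrt (by norm_num)
  have sqrt2pos : 0 < Real.sqrt 2 := Real.sqrt_pos.mpr (by norm_num)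
  -- sides
  obtain ⟨u, hu⟩ : ∃ x, x = B - A := ⟨_, rfl⟩
  obtain ⟨w, hw⟩ : ∃ x, x = C - A := ⟨_, rfl⟩
  obtain ⟨a, ha⟩ : ∃ x, x = Complex.abs u := ⟨_, rfl⟩
  obtain ⟨b, hb⟩ : ∃ x, x = Complex.abs w := ⟨_, rfl⟩
  obtain ⟨c, hc⟩ : ∃ x, x = Complex.abs (C - B) := ⟨_, rfl⟩
  have ha0 : 0 < a := by
    rw [ha]; exact Complex.abs.pos (by rw [hu]; exact sub_ne_zero.mpr hBA)
  have hb0 : 0 < b := by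
    rw [hb]; exact Complex.abs.pos (by rw [hw]; exact sub_ne_zero.mpr hCA)
  have hc0 : 0 < c := by
    rw [hc]; exact Complex.abs.pos (sub_ne_zero.mpr hCB)
  have hdAB : dist A B = a := by rw [dist_eq_abs, ha, hu, ← Complex.abs.map_neg]; ring_nf
  have hdAC : dist A C = b := by rw [dist_eq_abs, hb, hw, ← Complex.abs.map_neg]; ring_nf
  have hdBC : dist B C = c := by rw [dist_eq_abs, hc, ← Complex.abs.map_neg]; ring_nf
  -- S
  obtain ⟨S, hS⟩ : ∃ x, x = |((starRingEnd ℂ) u * w).im| := ⟨_, rfl⟩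
  have hSA : sA * (a * b) = S := by
    rw [hsAdef, hS, ha, hb, hu, hw]
    exact sin_angle_mul_abs (B - A) (C - A)
  have hSB : sB * (a * c) = S := by
    have h0 := sin_angle_mul_abs (A - B) (C - B)
    have h1 : Complex.abs (A - B) = a := by rw [ha, hu, ← Complex.abs.map_neg]; ring_nf
    have h2 : ((starRingEnd ℂ) (A - B) * (C - B)).im = -(((starRingEnd ℂ) u * w).im) := by
      rw [hu, hw]
      simp only [Complex.mul_im, Complex.sub_re, Complex.sub_im, Complex.conj_re, Complex.conj_im,
        map_sub]
      ring
    rw [h1, h2, abs_neg, ← hc, ← hS] at h0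
    rw [hsBdef]
    exact h0
  have hSC : sC * (b * c) = S := by
    have h0 := sin_angle_mul_abs (A - C) (B - C)
    have h1 : Complex.abs (A - C) = b := by rw [hb, hw, ← Complex.abs.map_neg]; ring_nf
    have h1' : Complex.abs (B - C) = c := by rw [hc, ← Complex.abs.map_neg]; ring_nf
    have h2 : ((starRingEnd ℂ) (A - C) * (B - C)).im = ((starRingEnd ℂ) u * w).im := by
      rw [hu, hw]
      simp only [Complex.mul_im, Complex.sub_re, Complex.sub_im, Complex.conj_re, Complex.conj_im,
        map_sub]
      ring
    rw [h1, h1', h2, ← hS] at h0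
    rw [hsCdef]
    exact h0
  have hS0 : 0 < S := by
    have hsA0 : 0 < sA := by nlinarith
    rw [← hSA]; positivity
  -- the longest side
  obtain ⟨d, hd⟩ : ∃ x, x = max a (max c b) := ⟨_, rfl⟩
  have hd1 : ℓ / 2 ≤ d := by rw [hd]; rwa [hdAB, hdBC, hdAC] at hlong1
  have hd2 : d ≤ ℓ := by rw [hd]; rwa [hdAB, hdBC, hdAC] at hlong2
  have had : a ≤ d := by rw [hd]; exact le_max_left _ _
  have hcd : c ≤ d := by rw [hd]; exact le_trans (le_max_left _ _) (le_max_right _ _)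
  have hbd : b ≤ d := by rw [hd]; exact le_trans (le_max_right _ _) (le_max_right _ _)
  have hd0 : 0 < d := lt_of_lt_of_le (by linarith) hd1
  obtain ⟨hSd, hSub⟩ : d ^ 2 / 2 ≤ S ∧ S ≤ a * b := by
    rw [hd]
    exact sides_key ha0 hb0 hc0 sqrt2sq sqrt2pos hsA1 hsB1 hsC1 hsA2 hsB2 hsC2 hSA hSB hSC
  -- orientation sign and the rotation ζ by ±60°
  obtain ⟨sg, hsg⟩ : ∃ x : ℝ, x = (if 0 ≤ ((starRingEnd ℂ) u * w).im then (1:ℝ) else -1) :=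
    ⟨_, rfl⟩
  have hsg2 : sg ^ 2 = 1 := by rw [hsg]; split <;> norm_num
  have hsgS : sg * ((starRingEnd ℂ) u * w).im = S := by
    rw [hsg, hS]
    split
    · rw [one_mul, _root_.abs_of_nonneg (by assumption)]
    · rw [neg_one_mul, _root_.abs_of_neg (lt_of_not_ge (by assumption))]
  have s3sq : Real.sqrt 3 ^ 2 = 3 := Real.sq_sqrt (by norm_num)
  have s31 : 1 ≤ Real.sqrt 3 := by
    rw [show (1:ℝ) = Real.sqrt 1 by simp]
    exact Real.sqrt_le_sqrt (by norm_num)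
  obtain ⟨ζ, hζ⟩ : ∃ z : ℂ, z = ⟨1/2, sg * (Real.sqrt 3 / 2)⟩ := ⟨_, rfl⟩
  have hζre : ζ.re = 1/2 := by rw [hζ]
  have hζim : ζ.im = sg * (Real.sqrt 3 / 2) := by rw [hζ]
  have hζns : Complex.normSq ζ = 1 := by
    rw [Complex.normSq_apply, hζre, hζim]
    linear_combination (sg^2/4) * s3sq + (3/4) * hsg2
  have hζabs : Complex.abs ζ = 1 := by rw [Complex.abs_apply, hζns, Real.sqrt_one]
  have h1ζns : Complex.normSq (1 - ζ) = 1 := by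
    rw [Complex.normSq_apply, Complex.sub_re, Complex.sub_im, Complex.one_re, Complex.one_im,
      hζre, hζim]
    linear_combination (sg^2/4) * s3sq + (3/4) * hsg2
  have h1ζabs : Complex.abs (1 - ζ) = 1 := by rw [Complex.abs_apply, h1ζns, Real.sqrt_one]
  -- scaling
  obtain ⟨t, ht⟩ : ∃ x : ℝ, x = ℓ / a := ⟨_, rfl⟩
  have ht0 : 0 < t := by rw [ht]; positivity
  have hta : t * a = ℓ := by rw [ht]; field_simp
  have habsu' : Complex.abs ((t:ℂ) * u) = ℓ := by
    rw [map_mul, Complex.abs_ofReal, abs_of_pos ht0, ← ha, hta]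
  have habsw' : Complex.abs (ζ * (t:ℂ) * u) = ℓ := by
    rw [map_mul, map_mul, hζabs, one_mul, Complex.abs_ofReal, abs_of_pos ht0, ← ha, hta]
  -- the denominator
  obtain ⟨Δ, hΔ⟩ : ∃ z : ℂ, z = u * (starRingEnd ℂ) w - w * (starRingEnd ℂ) u := ⟨_, rfl⟩
  have hS2 : S ^ 2 = (((starRingEnd ℂ) u * w).im) ^ 2 := by rw [hS]; exact sq_abs _
  have hΔns : Complex.normSq Δ = 4 * S ^ 2 := by
    rw [hΔ, Complex.normSq_apply, hS2]
    simp only [Complex.sub_re, Complex.sub_im, Complex.mul_re, Complex.mul_im,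
      Complex.conj_re, Complex.conj_im]
    ring
  have hΔ0 : Δ ≠ 0 := by
    intro h
    rw [h, map_zero] at hΔns
    have h2 : S ^ 2 = 0 := by linarith
    exact absurd ((pow_eq_zero_iff two_ne_zero).mp h2) (ne_of_gt hS0)
  have hΔ0' : u * (starRingEnd ℂ) w - w * (starRingEnd ℂ) u ≠ 0 := by rw [← hΔ]; exact hΔ0
  -- the linear coefficients
  obtain ⟨α, hα⟩ : ∃ z : ℂ,
      z = ((t:ℂ) * u * (starRingEnd ℂ) w - ζ * (t:ℂ) * u * (starRingEnd ℂ) u) / Δ := ⟨_, rfl⟩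
  obtain ⟨β, hβ⟩ : ∃ z : ℂ,
      z = (u * (ζ * (t:ℂ) * u) - w * ((t:ℂ) * u)) / Δ := ⟨_, rfl⟩
  have hQ : α * u + β * (starRingEnd ℂ) u = (t:ℂ) * u := by
    rw [hα, hβ, hΔ]
    rw [div_mul_eq_mul_div, div_mul_eq_mul_div, ← add_div, div_eq_iff hΔ0']
    ring
  have hR : α * w + β * (starRingEnd ℂ) w = ζ * (t:ℂ) * u := by
    rw [hα, hβ, hΔ]
    rw [div_mul_eq_mul_div, div_mul_eq_mul_div, ← add_div, div_eq_iff hΔ0']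
    ring
  -- norm bounds on α, β
  have habsΔ : Complex.abs Δ = 2 * S := by
    rw [Complex.abs_apply, hΔns, show 4*S^2 = (2*S)^2 by ring, Real.sqrt_sq (by positivity)]
  have hn1 : Complex.abs ((t:ℂ) * u * (starRingEnd ℂ) w - ζ * (t:ℂ) * u * (starRingEnd ℂ) u)
      ≤ ℓ * (a + b) := by
    have h1 := norm_sub_le ((t:ℂ) * u * (starRingEnd ℂ) w) (ζ * (t:ℂ) * u * (starRingEnd ℂ) u)
    have e1 : ‖(t:ℂ) * u * (starRingEnd ℂ) w‖ = ℓ * b := by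
      rw [show ∀ z : ℂ, ‖z‖ = Complex.abs z from fun _ => rfl, map_mul, habsu',
        Complex.abs_conj, ← hb]
    have e2 : ‖ζ * (t:ℂ) * u * (starRingEnd ℂ) u‖ = ℓ * a := by
      rw [show ∀ z : ℂ, ‖z‖ = Complex.abs z from fun _ => rfl, map_mul, habsw',
        Complex.abs_conj, ← ha]
    rw [show ∀ z : ℂ, ‖z‖ = Complex.abs z from fun _ => rfl] at h1
    rw [e1, e2] at h1
    calc Complex.abs _ ≤ ℓ * b + ℓ * a := h1
      _ = ℓ * (a + b) := by ring
  have hn2 : Complex.abs (u * (ζ * (t:ℂ) * u) - w * ((t:ℂ) * u)) ≤ ℓ * (a + b) := by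
    have h1 := norm_sub_le (u * (ζ * (t:ℂ) * u)) (w * ((t:ℂ) * u))
    have e1 : ‖u * (ζ * (t:ℂ) * u)‖ = a * ℓ := by
      rw [show ∀ z : ℂ, ‖z‖ = Complex.abs z from fun _ => rfl, map_mul, habsw', ← ha]
    have e2 : ‖w * ((t:ℂ) * u)‖ = b * ℓ := by
      rw [show ∀ z : ℂ, ‖z‖ = Complex.abs z from fun _ => rfl, map_mul, habsu', ← hb]
    rw [show ∀ z : ℂ, ‖z‖ = Complex.abs z from fun _ => rfl] at h1
    rw [e1, e2] at h1
    calc Complex.abs _ ≤ a * ℓ + b * ℓ := h1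
      _ = ℓ * (a + b) := by ring
  have habsα : Complex.abs α ≤ ℓ * (a + b) / (2 * S) := by
    rw [hα, map_div₀, habsΔ]
    exact (div_le_div_iff_of_pos_right (by positivity)).mpr hn1
  have habsβ : Complex.abs β ≤ ℓ * (a + b) / (2 * S) := by
    rw [hβ, map_div₀, habsΔ]
    exact (div_le_div_iff_of_pos_right (by positivity)).mpr hn2
  -- determinant identity
  have hdet : (Complex.abs α) ^ 2 - (Complex.abs β) ^ 2 = Real.sqrt 3 * ℓ ^ 2 / (2 * S) := by
    rw [hα, hβ, map_div₀, map_div₀, div_pow, div_pow, div_sub_div_same]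
    simp only [Complex.sq_abs]
    rw [detkey u w ζ t, hΔns]
    have e1 : t ^ 2 * a ^ 2 = ℓ ^ 2 := by rw [← hta]; ring
    have hnsu : Complex.normSq u = a ^ 2 := by rw [ha]; exact (Complex.sq_abs u).symm
    rw [hnsu, hζim]
    rw [div_eq_div_iff (by positivity) (by positivity)]
    linear_combination (4 * Real.sqrt 3 * (sg * ((starRingEnd ℂ) u * w).im) * S) * e1
      + (4 * Real.sqrt 3 * ℓ ^ 2 * S) * hsgS
  obtain ⟨hup, hlo⟩ := bounds_key (Complex.abs.nonneg α) (Complex.abs.nonneg β) hℓ hS0 hd0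
    ha0 hb0 had hbd hd2 hd1 hSd s3sq s31 habsα habsβ hdet
  refine ⟨Fmap α β A, 0, (t:ℂ) * u, ζ * (t:ℂ) * u, ?_, ?_, ?_, ?_, ?_, ?_, ?_⟩
  · rw [dist_eq_abs, zero_sub, Complex.abs.map_neg, habsu']
  · rw [dist_eq_abs, show (t:ℂ) * u - ζ * (t:ℂ) * u = (1 - ζ) * ((t:ℂ) * u) by ring,
      map_mul, h1ζabs, one_mul, habsu']
  · rw [dist_eq_abs, zero_sub, Complex.abs.map_neg, habsw']
  · show α * (A - A) + β * (starRingEnd ℂ) (A - A) = 0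
    simp
  · show α * (B - A) + β * (starRingEnd ℂ) (B - A) = (t:ℂ) * u
    rw [← hu]; exact hQ
  · show α * (C - A) + β * (starRingEnd ℂ) (C - A) = ζ * (t:ℂ) * u
    rw [← hw]; exact hR
  · intro x y
    have hfd : Fmap α β A x - Fmap α β A y = α * (x - y) + β * ((starRingEnd ℂ) (x - y)) := by
      show (α * (x - A) + β * (starRingEnd ℂ) (x - A))
          - (α * (y - A) + β * (starRingEnd ℂ) (y - A)) = _
      simp only [map_sub]
      ring
    rw [dist_eq_abs, dist_eq_abs, hfd]
    have hub : Complex.abs (α * (x - y) + β * ((starRingEnd ℂ) (x - y)))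
        ≤ (Complex.abs α + Complex.abs β) * Complex.abs (x - y) := by
      calc Complex.abs (α * (x - y) + β * ((starRingEnd ℂ) (x - y)))
          ≤ Complex.abs (α * (x - y)) + Complex.abs (β * ((starRingEnd ℂ) (x - y))) :=
            Complex.abs.add_le _ _
        _ = (Complex.abs α + Complex.abs β) * Complex.abs (x - y) := by
            rw [map_mul, map_mul, Complex.abs_conj]; ring
    have hlb : (Complex.abs α - Complex.abs β) * Complex.abs (x - y)
        ≤ Complex.abs (α * (x - y) + β * ((starRingEnd ℂ) (x - y))) := by
      have h1 := Complex.abs.add_le (α * (x - y) + β * ((starRingEnd ℂ) (x - y)))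
        (-(β * ((starRingEnd ℂ) (x - y))))
      rw [add_neg_cancel_right, Complex.abs.map_neg, map_mul, map_mul, Complex.abs_conj] at h1
      rw [sub_mul]
      linarith
    have hZ : (0:ℝ) ≤ Complex.abs (x - y) := Complex.abs.nonneg _
    constructor
    · have h2 := mul_le_mul_of_nonneg_right hlo hZ
      rw [one_div, inv_mul_eq_div] at h2
      linarith
    · have h2 := mul_le_mul_of_nonneg_right hup hZ
      linarith






end helpers

/-- A Euclidean triangle all of whose angles are greater than `π/4` and whose longest
side has length between `ℓ/2` and `ℓ` is `8`-bilipschitz homeomorphic, via an affine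
map, to the equilateral triangle of side length `ℓ`. -/
theorem eight_bilipschitz_to_equilateral
    (ℓ : ℝ) (hℓ : 0 < ℓ)
    (A B C : EuclideanSpace ℝ (Fin 2))
    (hangA : π / 4 < ∠ B A C)
    (hangB : π / 4 < ∠ A B C)
    (hangC : π / 4 < ∠ A C B)
    (hlong : ℓ / 2 ≤ max (dist A B) (max (dist B C) (dist A C)) ∧
             max (dist A B) (max (dist B C) (dist A C)) ≤ ℓ) :
    ∃ (f : EuclideanSpace ℝ (Fin 2) →ᵃ[ℝ] EuclideanSpace ℝ (Fin 2))
      (P Q R : EuclideanSpace ℝ (Fin 2)),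
      dist P Q = ℓ ∧ dist Q R = ℓ ∧ dist P R = ℓ ∧
      f A = P ∧ f B = Q ∧ f C = R ∧
      ∀ x y : EuclideanSpace ℝ (Fin 2),
        dist x y / 8 ≤ dist (f x) (f y) ∧ dist (f x) (f y) ≤ 8 * dist x y := by
  set e := Complex.orthonormalBasisOneI.repr with he
  set A' := e.symm A with hA'
  set B' := e.symm B with hB'
  set C' := e.symm C with hC'
  have hang : ∀ x y z : EuclideanSpace ℝ (Fin 2), ∠ (e.symm x) (e.symm y) (e.symm z) = ∠ x y z := by
    intro x y z
    have := e.symm.toAffineIsometryEquiv.toAffineIsometry.angle_map x y z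
    simpa using this
  have hdist : ∀ x y : EuclideanSpace ℝ (Fin 2), dist (e.symm x) (e.symm y) = dist x y := fun x y =>
    e.symm.isometry.dist_eq x y
  obtain ⟨g, P', Q', R', h1, h2, h3, h4, h5, h6, h7⟩ :=
    complex_eight ℓ hℓ A' B' C'
      (by rw [hA', hB', hC', hang]; exact hangA)
      (by rw [hA', hB', hC', hang]; exact hangB)
      (by rw [hA', hB', hC', hang]; exact hangC)
      (by rw [hA', hB', hC', hdist, hdist, hdist]; exact hlong.1)
      (by rw [hA', hB', hC', hdist, hdist, hdist]; exact hlong.2)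
  refine ⟨(e.toLinearEquiv.toLinearMap.toAffineMap).comp
      (g.comp (e.symm.toLinearEquiv.toLinearMap.toAffineMap)), e P', e Q', e R', ?_, ?_, ?_,
      ?_, ?_, ?_, ?_⟩
  · rw [e.dist_map]; exact h1
  · rw [e.dist_map]; exact h2
  · rw [e.dist_map]; exact h3
  · simp [← hA', h4]
  · simp [← hB', h5]
  · simp [← hC', h6]
  · intro x y
    have := h7 (e.symm x) (e.symm y)
    rw [hdist] at this
    simpa [e.dist_map] using this
end

section
/- Each of the following triangles is 4-bilipschitz homeomorphic to the equilateral triangle Δ of side length ℓ: (1) the equilateral triangle of side ℓ/2; (2) the isosceles triangle with apex angle 2π/3 and two sides of length ℓ/2; (3) the right triangle with angles π/2, π/3, π/6 and sides ℓ, (√3/2)ℓ, ℓ/2. -/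
open Real EuclideanGeometry

/-- `S` and `T` are `K`-bilipschitz homeomorphic subsets of the plane. -/
def IsBilipEquiv (K : ℝ) (S T : Set (EuclideanSpace ℝ (Fin 2))) : Prop :=
  ∃ f : EuclideanSpace ℝ (Fin 2) → EuclideanSpace ℝ (Fin 2),
    Set.BijOn f S T ∧
    ∀ x ∈ S, ∀ y ∈ S,
      dist x y / K ≤ dist (f x) (f y) ∧ dist (f x) (f y) ≤ K * dist x y

section Aux

open scoped RealInnerProductSpace

set_option maxHeartbeats 1000000

private lemma expand_sq (u v : EuclideanSpace ℝ (Fin 2)) (s t : ℝ) :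
    ‖s • u + t • v‖ ^ 2 = s ^ 2 * ‖u‖ ^ 2 + 2 * s * t * ⟪u, v⟫ + t ^ 2 * ‖v‖ ^ 2 := by
  rw [norm_add_sq_real, real_inner_smul_left, real_inner_smul_right, norm_smul, norm_smul]
  simp only [Real.norm_eq_abs, mul_pow, sq_abs]
  ring

private lemma norm_sq_of_dist {A B : EuclideanSpace ℝ (Fin 2)} {r : ℝ} (h : dist A B = r) :
    ‖B - A‖ ^ 2 = r ^ 2 := by
  rw [← h, dist_comm, dist_eq_norm]

private lemma inner_of_dist (A B C : EuclideanSpace ℝ (Fin 2)) :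
    ⟪B - A, C - A⟫ = (dist A B ^ 2 + dist A C ^ 2 - dist B C ^ 2) / 2 := by
  have h := norm_sub_sq_real (B - A) (C - A)
  rw [show (B - A) - (C - A) = B - C from by abel] at h
  rw [dist_comm A B, dist_comm A C, dist_eq_norm, dist_eq_norm, dist_eq_norm]
  linarith

private lemma eq_zero_of_sq_nonpos {x : ℝ} (h : x ^ 2 ≤ 0) : x = 0 :=
  pow_eq_zero_iff two_ne_zero |>.mp (le_antisymm h (sq_nonneg x))

private lemma bilip_of_gram (A B C P Q R : EuclideanSpace ℝ (Fin 2))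
    (hpos : ∀ s t : ℝ, s • (B - A) + t • (C - A) = 0 → s = 0 ∧ t = 0)
    (hle : ∀ s t : ℝ, ‖s • (Q - P) + t • (R - P)‖ ^ 2 ≤ 16 * ‖s • (B - A) + t • (C - A)‖ ^ 2)
    (hge : ∀ s t : ℝ, ‖s • (B - A) + t • (C - A)‖ ^ 2 ≤ 16 * ‖s • (Q - P) + t • (R - P)‖ ^ 2) :
    IsBilipEquiv 4 (convexHull ℝ {A, B, C}) (convexHull ℝ {P, Q, R}) := by
  have hind : LinearIndependent ℝ ![B - A, C - A] := by
    rw [LinearIndependent.pair_iff]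
    intro s t h
    exact hpos s t h
  let b : Module.Basis (Fin 2) ℝ (EuclideanSpace ℝ (Fin 2)) :=
    basisOfLinearIndependentOfCardEqFinrank hind (by simp)
  have hb : ∀ i, b i = ![B - A, C - A] i := fun i => by
    rw [show b = basisOfLinearIndependentOfCardEqFinrank hind (by simp) from rfl,
      coe_basisOfLinearIndependentOfCardEqFinrank]
  let M : EuclideanSpace ℝ (Fin 2) →ₗ[ℝ] EuclideanSpace ℝ (Fin 2) :=
    b.constr ℝ ![Q - P, R - P]
  have hMb : ∀ i, M (b i) = ![Q - P, R - P] i := fun i => b.constr_basis ℝ _ i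
  have hM : ∀ v : EuclideanSpace ℝ (Fin 2), ∃ s t : ℝ,
      v = s • (B - A) + t • (C - A) ∧ M v = s • (Q - P) + t • (R - P) := by
    intro v
    refine ⟨b.repr v 0, b.repr v 1, ?_, ?_⟩
    · conv_lhs => rw [← b.sum_repr v]
      rw [Fin.sum_univ_two, hb 0, hb 1]
      simp
    · conv_lhs => rw [← b.sum_repr v]
      rw [Fin.sum_univ_two, map_add, map_smul, map_smul, hMb 0, hMb 1]
      simp
  have key : ∀ v : EuclideanSpace ℝ (Fin 2), ‖v‖ ≤ 4 * ‖M v‖ ∧ ‖M v‖ ≤ 4 * ‖v‖ := by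
    intro v
    obtain ⟨s, t, hv, hMv⟩ := hM v
    have h1 := hle s t
    have h2 := hge s t
    rw [← hv] at h2
    rw [← hv, ← hMv] at h1
    rw [← hMv] at h2
    constructor
    · by_contra hc
      push_neg at hc
      nlinarith [norm_nonneg v, norm_nonneg (M v)]
    · by_contra hc
      push_neg at hc
      nlinarith [norm_nonneg v, norm_nonneg (M v)]
  have hMBA : M (B - A) = Q - P := by have := hMb 0; rw [hb 0] at this; simpa using this
  have hMCA : M (C - A) = R - P := by have := hMb 1; rw [hb 1] at this; simpa using this
  let φ : EuclideanSpace ℝ (Fin 2) →ᵃ[ℝ] EuclideanSpace ℝ (Fin 2) :=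
    { toFun := fun x => P + M (x - A)
      linear := M
      map_vadd' := by
        intro p v
        simp only [vadd_eq_add]
        show P + M (v + p - A) = M v + (P + M (p - A))
        rw [add_sub_assoc, map_add M v (p - A)]
        abel }
  have hφd : ∀ x y : EuclideanSpace ℝ (Fin 2), φ x - φ y = M (x - y) := by
    intro x y
    have h1 : (P + M (x - A)) - (P + M (y - A)) = M ((x - A) - (y - A)) := by
      rw [map_sub M (x - A) (y - A)]; abel
    have h2 : (x - A) - (y - A) = x - y := sub_sub_sub_cancel_right x y A
    show (P + M (x - A)) - (P + M (y - A)) = M (x - y)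
    rw [h1, h2]
  have himg : φ '' (convexHull ℝ {A, B, C}) = convexHull ℝ {P, Q, R} := by
    rw [AffineMap.image_convexHull]
    congr 1
    have hA : φ A = P := by show P + M (A - A) = P; rw [sub_self, map_zero, add_zero]
    have hB : φ B = Q := by show P + M (B - A) = Q; rw [hMBA]; abel
    have hC : φ C = R := by show P + M (C - A) = R; rw [hMCA]; abel
    rw [Set.image_insert_eq, Set.image_insert_eq, Set.image_singleton, hA, hB, hC]
  have hinj : Function.Injective φ := by
    intro x y h
    have h0 : M (x - y) = 0 := by rw [← hφd x y, h, sub_self]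
    have := (key (x - y)).1
    rw [h0, norm_zero, mul_zero] at this
    have : x - y = 0 := by
      have hn := norm_nonneg (x - y)
      have : ‖x - y‖ = 0 := le_antisymm this hn
      exact norm_eq_zero.mp this
    exact sub_eq_zero.mp this
  refine ⟨φ, ?_, ?_⟩
  · rw [← himg]
    exact (hinj.injOn).bijOn_image
  · intro x hx y hy
    have hd : dist (φ x) (φ y) = ‖M (x - y)‖ := by rw [dist_eq_norm, hφd]
    have hk := key (x - y)
    rw [dist_eq_norm x y, hd]
    exact ⟨by linarith [hk.1], by linarith [hk.2]⟩

end Aux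

section Main

open scoped RealInnerProductSpace

set_option maxHeartbeats 1000000 in
/-- Each of the following is `4`-bilipschitz homeomorphic to the equilateral triangle `Δ`
of side `ℓ`: (1) the equilateral triangle of side `ℓ/2`; (2) the isosceles triangle with
apex angle `2π/3` and two sides of length `ℓ/2`; (3) the right triangle with angles
`π/2, π/3, π/6` and sides `ℓ, (√3/2)ℓ, ℓ/2`. -/
theorem four_bilipschitz_subtriangles
    (ℓ : ℝ) (hℓ : 0 < ℓ)
    (P Q R : EuclideanSpace ℝ (Fin 2))
    (hΔ : dist P Q = ℓ ∧ dist Q R = ℓ ∧ dist P R = ℓ)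
    (A₁ B₁ C₁ : EuclideanSpace ℝ (Fin 2))
    (h₁ : dist A₁ B₁ = ℓ / 2 ∧ dist B₁ C₁ = ℓ / 2 ∧ dist A₁ C₁ = ℓ / 2)
    (A₂ B₂ C₂ : EuclideanSpace ℝ (Fin 2))
    (h₂ : dist A₂ B₂ = ℓ / 2 ∧ dist A₂ C₂ = ℓ / 2 ∧ ∠ B₂ A₂ C₂ = 2 * π / 3)
    (A₃ B₃ C₃ : EuclideanSpace ℝ (Fin 2))
    (h₃ : dist A₃ B₃ = ℓ ∧ dist B₃ C₃ = Real.sqrt 3 / 2 * ℓ ∧ dist A₃ C₃ = ℓ / 2 ∧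
          ∠ A₃ C₃ B₃ = π / 2 ∧ ∠ C₃ A₃ B₃ = π / 3 ∧ ∠ A₃ B₃ C₃ = π / 6) :
    IsBilipEquiv 4 (convexHull ℝ {A₁, B₁, C₁}) (convexHull ℝ {P, Q, R}) ∧
    IsBilipEquiv 4 (convexHull ℝ {A₂, B₂, C₂}) (convexHull ℝ {P, Q, R}) ∧
    IsBilipEquiv 4 (convexHull ℝ {A₃, B₃, C₃}) (convexHull ℝ {P, Q, R}) := by
  obtain ⟨hPQ, hQR, hPR⟩ := hΔ
  have ΔQP : ‖Q - P‖ ^ 2 = ℓ ^ 2 := norm_sq_of_dist hPQ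
  have ΔRP : ‖R - P‖ ^ 2 = ℓ ^ 2 := norm_sq_of_dist hPR
  have Δin : ⟪Q - P, R - P⟫ = ℓ ^ 2 / 2 := by
    rw [inner_of_dist, hPQ, hPR, hQR]; ring
  have hΔq : ∀ s t : ℝ, ‖s • (Q - P) + t • (R - P)‖ ^ 2 = ℓ ^ 2 * (s ^ 2 + s * t + t ^ 2) := by
    intro s t; rw [expand_sq, ΔQP, ΔRP, Δin]; ring
  refine ⟨?_, ?_, ?_⟩
  -- Case 1: equilateral triangle of side ℓ/2
  · obtain ⟨d1, d2, d3⟩ := h₁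
    have gAB : ‖B₁ - A₁‖ ^ 2 = (ℓ / 2) ^ 2 := norm_sq_of_dist d1
    have gAC : ‖C₁ - A₁‖ ^ 2 = (ℓ / 2) ^ 2 := norm_sq_of_dist d3
    have gin : ⟪B₁ - A₁, C₁ - A₁⟫ = ℓ ^ 2 / 8 := by
      rw [inner_of_dist, d1, d2, d3]; ring
    have hq : ∀ s t : ℝ, ‖s • (B₁ - A₁) + t • (C₁ - A₁)‖ ^ 2
        = ℓ ^ 2 / 4 * (s ^ 2 + s * t + t ^ 2) := by
      intro s t; rw [expand_sq, gAB, gAC, gin]; ring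
    apply bilip_of_gram
    · intro s t h
      have h0 := hq s t
      rw [h, norm_zero] at h0
      have hq0 : s ^ 2 + s * t + t ^ 2 = 0 := by
        have hl2 : (0:ℝ) < ℓ ^ 2 / 4 := by positivity
        have := h0.symm
        rcases mul_eq_zero.mp (by linarith [this] : ℓ ^ 2 / 4 * (s ^ 2 + s * t + t ^ 2) = 0)
          with h' | h'
        · exact absurd h' (ne_of_gt hl2)
        · exact h'
      constructor
      · exact eq_zero_of_sq_nonpos (by nlinarith [sq_nonneg (s + 2 * t)])
      · exact eq_zero_of_sq_nonpos (by nlinarith [sq_nonneg (2 * s + t)])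
    · intro s t
      rw [hΔq s t, hq s t]
      nlinarith [sq_nonneg (ℓ * (s + t)), sq_nonneg (ℓ * s), sq_nonneg (ℓ * t)]
    · intro s t
      rw [hΔq s t, hq s t]
      nlinarith [sq_nonneg (ℓ * (s + t)), sq_nonneg (ℓ * s), sq_nonneg (ℓ * t)]
  -- Case 2: isosceles triangle with apex angle 2π/3
  · obtain ⟨d1, d2, dang⟩ := h₂
    have hnB : ‖B₂ - A₂‖ = ℓ / 2 := by rw [← d1, dist_comm, dist_eq_norm]
    have hnC : ‖C₂ - A₂‖ = ℓ / 2 := by rw [← d2, dist_comm, dist_eq_norm]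
    have hang : InnerProductGeometry.angle (B₂ - A₂) (C₂ - A₂) = 2 * π / 3 := dang
    have gin : ⟪B₂ - A₂, C₂ - A₂⟫ = -(ℓ ^ 2) / 8 := by
      have hc := InnerProductGeometry.cos_angle_mul_norm_mul_norm (B₂ - A₂) (C₂ - A₂)
      rw [hang, hnB, hnC] at hc
      have hcos : Real.cos (2 * π / 3) = -(1 / 2) := by
        rw [show 2 * π / 3 = π - π / 3 by ring, Real.cos_pi_sub, Real.cos_pi_div_three]
      rw [hcos] at hc
      rw [← hc]; ring
    have gAB : ‖B₂ - A₂‖ ^ 2 = (ℓ / 2) ^ 2 := by rw [hnB]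
    have gAC : ‖C₂ - A₂‖ ^ 2 = (ℓ / 2) ^ 2 := by rw [hnC]
    have hq : ∀ s t : ℝ, ‖s • (B₂ - A₂) + t • (C₂ - A₂)‖ ^ 2
        = ℓ ^ 2 / 4 * (s ^ 2 - s * t + t ^ 2) := by
      intro s t; rw [expand_sq, gAB, gAC, gin]; ring
    apply bilip_of_gram
    · intro s t h
      have h0 := hq s t
      rw [h, norm_zero] at h0
      have hq0 : s ^ 2 - s * t + t ^ 2 = 0 := by
        have hl2 : (0:ℝ) < ℓ ^ 2 / 4 := by positivity
        rcases mul_eq_zero.mp (by linarith [h0.symm] :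
            ℓ ^ 2 / 4 * (s ^ 2 - s * t + t ^ 2) = 0) with h' | h'
        · exact absurd h' (ne_of_gt hl2)
        · exact h'
      constructor
      · exact eq_zero_of_sq_nonpos (by nlinarith [sq_nonneg (s - 2 * t)])
      · exact eq_zero_of_sq_nonpos (by nlinarith [sq_nonneg (2 * s - t)])
    · intro s t
      rw [hΔq s t, hq s t]
      nlinarith [sq_nonneg (ℓ * (s - t)), sq_nonneg (ℓ * s), sq_nonneg (ℓ * t)]
    · intro s t
      rw [hΔq s t, hq s t]
      nlinarith [sq_nonneg (ℓ * (s + t)), sq_nonneg (ℓ * s), sq_nonneg (ℓ * t)]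
  -- Case 3: right triangle
  · obtain ⟨d1, d2, d3, -, -, -⟩ := h₃
    have gAB : ‖B₃ - A₃‖ ^ 2 = ℓ ^ 2 := norm_sq_of_dist d1
    have gAC : ‖C₃ - A₃‖ ^ 2 = (ℓ / 2) ^ 2 := norm_sq_of_dist d3
    have gin : ⟪B₃ - A₃, C₃ - A₃⟫ = ℓ ^ 2 / 4 := by
      rw [inner_of_dist, d1, d2, d3]
      have h3 : Real.sqrt 3 ^ 2 = 3 := Real.sq_sqrt (by norm_num)
      rw [show (Real.sqrt 3 / 2 * ℓ) ^ 2 = Real.sqrt 3 ^ 2 / 4 * ℓ ^ 2 by ring, h3]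
      ring
    have hq : ∀ s t : ℝ, ‖s • (B₃ - A₃) + t • (C₃ - A₃)‖ ^ 2
        = ℓ ^ 2 * (s ^ 2 + s * t / 2 + t ^ 2 / 4) := by
      intro s t; rw [expand_sq, gAB, gAC, gin]; ring
    apply bilip_of_gram
    · intro s t h
      have h0 := hq s t
      rw [h, norm_zero] at h0
      have hq0 : s ^ 2 + s * t / 2 + t ^ 2 / 4 = 0 := by
        have hl2 : (0:ℝ) < ℓ ^ 2 := by positivity
        rcases mul_eq_zero.mp (by linarith [h0.symm] :
            ℓ ^ 2 * (s ^ 2 + s * t / 2 + t ^ 2 / 4) = 0) with h' | h'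
        · exact absurd h' (ne_of_gt hl2)
        · exact h'
      constructor
      · exact eq_zero_of_sq_nonpos (by nlinarith [sq_nonneg (s + t)])
      · exact eq_zero_of_sq_nonpos (by nlinarith [sq_nonneg (4 * s + t)])
    · intro s t
      rw [hΔq s t, hq s t]
      nlinarith [sq_nonneg (ℓ * (2 * s + t)), sq_nonneg (ℓ * s), sq_nonneg (ℓ * t)]
    · intro s t
      rw [hΔq s t, hq s t]
      nlinarith [sq_nonneg (ℓ * (s + t)), sq_nonneg (ℓ * s), sq_nonneg (ℓ * t)]

end Main
end
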